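/- Let (CM, d) be a chain complex of Λ-modules over a field Λ, let CF be a Λ-vector space, and let PSS : CM → CF, SSP : CF → CM, ι : CM → CM, h : CM → CM be Λ-linear maps such that (i) ι∘d = d∘ι, (ii) ι is a Λ-module isomorphism, and (iii) ι − SSP∘PSS = d∘h + h∘d. If c₁,…,c_k ∈ CM are cycles (d c_i = 0) whose homology classes are linearly independent over Λ, then PSS(c₁),…,PSS(c_k) ∈ CF are Λ-linearly independent. -/
import Mathlib


/-- Algebraic core of the Arnold-conjecture deduction: given `Λ`-linear maps
`PSS : CM → CF`, `SSP : CF → CM`, `ι, h : CM → CM` on a chain complex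
`(CM, d)` such that `ι` is a chain map, `ι` is an isomorphism, and
`ι − SSP∘PSS = d∘h + h∘d`, any cycles `c₁,…,c_k` whose homology classes are
linearly independent are mapped by `PSS` to `Λ`-linearly independent elements
of `CF`. -/
theorem stmt_4 {Λ : Type} [Field Λ] {CM CF : Type}
    [AddCommGroup CM] [Module Λ CM] [AddCommGroup CF] [Module Λ CF]
    (d : CM →ₗ[Λ] CM) (hd : d ∘ₗ d = 0)
    (PSS : CM →ₗ[Λ] CF) (SSP : CF →ₗ[Λ] CM) (ι h : CM →ₗ[Λ] CM)
    (hchain : ι ∘ₗ d = d ∘ₗ ι)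
    (hiso : Function.Bijective ι)
    (hhom : ι - SSP ∘ₗ PSS = d ∘ₗ h + h ∘ₗ d)
    (k : ℕ) (c : Fin k → CM) (hc : ∀ i, d (c i) = 0)
    (hind : ∀ lam : Fin k → Λ,
      (∑ i, lam i • c i) ∈ LinearMap.range d → ∀ i, lam i = 0) :
    LinearIndependent Λ (fun i => PSS (c i)) := by
  rw [Fintype.linearIndependent_iff]
  intro lam hlam
  set x : CM := ∑ i, lam i • c i with hx
  have hdx : d x = 0 := by
    simp [hx, map_sum, map_smul, hc]
  have hPx : PSS x = 0 := by
    simpa [hx, map_sum, map_smul] using hlam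
  have hιx : ι x = d (h x) := by
    have := congrArg (fun f => f x) hhom
    simp [LinearMap.sub_apply, LinearMap.add_apply, LinearMap.comp_apply, hPx, hdx] at this
    simpa using this
  -- x = d (ι⁻¹ (h x))
  let e : CM ≃ₗ[Λ] CM := LinearEquiv.ofBijective ι hiso
  have hcomm : ∀ z, e.symm (d z) = d (e.symm z) := by
    intro z
    have h1 : ι (d (e.symm z)) = d (ι (e.symm z)) := by
      have := congrArg (fun f => f (e.symm z)) hchain
      simpa using this
    have h2 : ι (e.symm z) = z := e.apply_symm_apply z
    rw [h2] at h1
    calc e.symm (d z) = e.symm (e (d (e.symm z))) := by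
          rw [show e (d (e.symm z)) = ι (d (e.symm z)) from rfl, h1]
      _ = d (e.symm z) := e.symm_apply_apply _
  have hxr : x ∈ LinearMap.range d := by
    have : x = d (e.symm (h x)) := by
      have h1 : e.symm (ι x) = x := e.symm_apply_apply x
      rw [hιx, hcomm] at h1
      exact h1.symm
    exact ⟨e.symm (h x), this.symm⟩
  exact hind lam hxr
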